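/- Fix ε > 0 and define F : ℝ² → ℝ³ by F(u, v) = (M1, M2, M3), where, with D = 4 + ε²(u² + v²): M1 = 2·(2·I11·u + ε·v·(I13·u + I23·v))/D, M2 = 2·(2·I22·v − ε·u·(I13·u + I23·v))/D, M3 = 2·(2·(I13·u + I23·v) + ε·(I22 − I11)·u·v)/D. Then F(0, 0) = (0, 0, 0), F is differentiable at (0, 0), and the image of the derivative of F at (0, 0) equals the plane d* = {(X, Y, Z) ∈ ℝ³ : I11·I22·Z = I13·I22·X + I11·I23·Y}. In particular the discrete momentum locus F(ℝ²) and the plane d* are tangent at the origin. -/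

import Mathlib

noncomputable section

/-- The parametrisation of the discrete momentum locus of the Moser–Veselov type
discretisation of the Suslov problem with time step `ε`. -/
def Fmv (I11 I22 I13 I23 ε : ℝ) : ℝ × ℝ → ℝ × ℝ × ℝ := fun p =>
  (2 * (2 * I11 * p.1 + ε * p.2 * (I13 * p.1 + I23 * p.2)) /
      (4 + ε ^ 2 * (p.1 ^ 2 + p.2 ^ 2)),
   2 * (2 * I22 * p.2 - ε * p.1 * (I13 * p.1 + I23 * p.2)) /
      (4 + ε ^ 2 * (p.1 ^ 2 + p.2 ^ 2)),
   2 * (2 * (I13 * p.1 + I23 * p.2) + ε * (I22 - I11) * p.1 * p.2) /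
      (4 + ε ^ 2 * (p.1 ^ 2 + p.2 ^ 2)))

/-- The discrete momentum locus of the Moser–Veselov type discretisation
of the Suslov problem passes through the origin, the parametrisation is differentiable
at `(0,0)`, and the image of its derivative there is the constraint plane `d*`; hence the
momentum locus and `d*` are tangent at the origin. -/
theorem suslov_momentum_locus_tangent_moser_veselov
    (I11 I22 I13 I23 : ℝ) (hI11 : 0 < I11) (hI22 : 0 < I22)
    (ε : ℝ) (hε : 0 < ε) :
    Fmv I11 I22 I13 I23 ε (0, 0) = (0, 0, 0) ∧
      DifferentiableAt ℝ (Fmv I11 I22 I13 I23 ε) (0, 0) ∧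
      Set.range (fderiv ℝ (Fmv I11 I22 I13 I23 ε) (0, 0)) =
        {p : ℝ × ℝ × ℝ | I11 * I22 * p.2.2 = I13 * I22 * p.1 + I11 * I23 * p.2.1} := by
  have hu : HasFDerivAt (fun p : ℝ × ℝ => p.1) (ContinuousLinearMap.fst ℝ ℝ ℝ) (0, 0) :=
    hasFDerivAt_fst
  have hv : HasFDerivAt (fun p : ℝ × ℝ => p.2) (ContinuousLinearMap.snd ℝ ℝ ℝ) (0, 0) :=
    hasFDerivAt_snd
  have hlin := (hu.const_mul I13).add (hv.const_mul I23)
  have hsq1 := hu.mul hu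
  rw [show ((fun p : ℝ × ℝ => p.1) * fun p : ℝ × ℝ => p.1) = fun p : ℝ × ℝ => p.1 ^ 2 from by
    funext p; simp only [Pi.mul_apply]; ring] at hsq1
  have hsq2 := hv.mul hv
  rw [show ((fun p : ℝ × ℝ => p.2) * fun p : ℝ × ℝ => p.2) = fun p : ℝ × ℝ => p.2 ^ 2 from by
    funext p; simp only [Pi.mul_apply]; ring] at hsq2
  have hden := (hasFDerivAt_const (4:ℝ) ((0,0) : ℝ × ℝ)).add
    ((hsq1.add hsq2).const_mul (ε ^ 2))
  have hden0 : (4:ℝ) + ε ^ 2 * (((0,0):ℝ × ℝ).1 ^ 2 + ((0,0):ℝ × ℝ).2 ^ 2) ≠ 0 := by norm_num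
  have hinv : HasFDerivAt (fun p : ℝ × ℝ => (4 + ε ^ 2 * (p.1 ^ 2 + p.2 ^ 2))⁻¹)
      ((-ContinuousLinearMap.mulLeftRight ℝ ℝ
          ((4 + ε ^ 2 * (((0,0):ℝ × ℝ).1 ^ 2 + ((0,0):ℝ × ℝ).2 ^ 2))⁻¹)
          ((4 + ε ^ 2 * (((0,0):ℝ × ℝ).1 ^ 2 + ((0,0):ℝ × ℝ).2 ^ 2))⁻¹)).comp
        (0 + ε ^ 2 • (((0,0):ℝ×ℝ).1 • ContinuousLinearMap.fst ℝ ℝ ℝ +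
          ((0,0):ℝ×ℝ).1 • ContinuousLinearMap.fst ℝ ℝ ℝ +
          (((0,0):ℝ×ℝ).2 • ContinuousLinearMap.snd ℝ ℝ ℝ +
            ((0,0):ℝ×ℝ).2 • ContinuousLinearMap.snd ℝ ℝ ℝ)))) (0,0) :=
    (hasFDerivAt_inv' hden0).comp (0,0) hden
  have h1 := (((hu.const_mul (2*I11)).add ((hv.const_mul ε).mul hlin)).const_mul 2).mul hinv
  have h2 := (((hv.const_mul (2*I22)).sub ((hu.const_mul ε).mul hlin)).const_mul 2).mul hinv
  have h3 := (((hlin.const_mul 2).add ((hu.const_mul (ε*(I22-I11))).mul hv)).const_mul 2).mul hinv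
  have hF := h1.prodMk (h2.prodMk h3)
  set L : ℝ × ℝ →L[ℝ] ℝ × ℝ × ℝ :=
    (I11 • ContinuousLinearMap.fst ℝ ℝ ℝ).prod
      ((I22 • ContinuousLinearMap.snd ℝ ℝ ℝ).prod
        (I13 • ContinuousLinearMap.fst ℝ ℝ ℝ + I23 • ContinuousLinearMap.snd ℝ ℝ ℝ)) with hL
  have hFL : HasFDerivAt (Fmv I11 I22 I13 I23 ε) L (0, 0) := by
    unfold Fmv
    simp only [div_eq_mul_inv]
    refine hF.congr_fderiv ?_
    refine ContinuousLinearMap.ext fun q => ?_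
    simp [hL]
    constructor
    · ring
    constructor
    · ring
    · ring
  refine ⟨by simp [Fmv], hFL.differentiableAt, ?_⟩
  rw [hFL.fderiv]
  ext q
  constructor
  · rintro ⟨⟨u, v⟩, rfl⟩
    simp [hL]
    ring
  · intro hq
    simp only [Set.mem_setOf_eq] at hq
    refine ⟨(q.1 / I11, q.2.1 / I22), ?_⟩
    have h1 : I11 ≠ 0 := hI11.ne'
    have h2 : I22 ≠ 0 := hI22.ne'
    have : (L (q.1 / I11, q.2.1 / I22)) =
        (q.1, q.2.1, I13 * (q.1 / I11) + I23 * (q.2.1 / I22)) := by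
      simp [hL]
      constructor <;> field_simp
    rw [this]
    have hz : I13 * (q.1 / I11) + I23 * (q.2.1 / I22) = q.2.2 := by
      field_simp
      linear_combination -hq
    rw [hz]

end
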